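/- Let V be a finite-dimensional ℚ_ℓ-vector space, T ⊆ V a ℤ_ℓ-lattice (full-rank ℤ_ℓ-submodule), and F a ℤ_ℓ-linear endomorphism of V preserving T. Suppose V^F = 0 (i.e., 1 − F is injective on V). Then the map v + T ↦ (F v − v) + T induces an isomorphism between the F-fixed points (V/T)^F of V/T and the quotient T/(1 − F)T. -/
import Mathlib


/-- Let `V` be a finite-dimensional `ℚ_ℓ`-vector space, `T` a full `ℤ_ℓ`-lattice, and `F`
a `ℤ_ℓ`-linear endomorphism of `V` preserving `T` with `V^F = 0`. Then `v + T ↦ (Fv − v) + T`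
induces an isomorphism `(V/T)^F ≅ T/(1 − F)T`. -/
theorem stmt8 (p : ℕ) [Fact p.Prime] {V : Type*} [AddCommGroup V] [Module ℚ_[p] V]
    [FiniteDimensional ℚ_[p] V] [Module ℤ_[p] V] [IsScalarTower ℤ_[p] ℚ_[p] V]
    (T : Submodule ℤ_[p] V) (hfull : Submodule.span ℚ_[p] (T : Set V) = ⊤) (hfg : T.FG)
    (F : V →ₗ[ℤ_[p]] V) (hFT : ∀ x ∈ T, F x ∈ T)
    (hfix : ∀ v : V, F v = v → v = 0) :
    let Fbar : (V ⧸ T) →ₗ[ℤ_[p]] (V ⧸ T) := Submodule.mapQ T T F hFT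
    let S : Submodule ℤ_[p] ↥T := Submodule.comap T.subtype (Submodule.map (LinearMap.id - F) T)
    ∃ ψ : ↥(LinearMap.ker (Fbar - LinearMap.id)) ≃+ (↥T ⧸ S),
      ∀ (v : V) (hv : F v - v ∈ T)
        (h : Fbar (Submodule.Quotient.mk v) = Submodule.Quotient.mk v),
        ψ ⟨Submodule.Quotient.mk v, by
            simp [LinearMap.mem_ker, LinearMap.sub_apply, h]⟩ =
          Submodule.Quotient.mk ⟨F v - v, hv⟩ := by
  intro Fbar S
  -- `F` is automatically `ℚ_p`-linear
  let F' : V →ₗ[ℚ_[p]] V :=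
    F.extendScalarsOfIsLocalization (nonZeroDivisors ℤ_[p]) ℚ_[p]
  let L : V →ₗ[ℚ_[p]] V := LinearMap.id - F'
  have hL : ∀ v : V, L v = v - F v := fun v => rfl
  have hinj : Function.Injective L := by
    intro a b hab
    have h0 : L (a - b) = 0 := by rw [map_sub, hab, sub_self]
    rw [hL, sub_eq_zero] at h0
    exact sub_eq_zero.mp (hfix _ h0.symm)
  have hsurj : Function.Surjective L := (LinearMap.injective_iff_surjective).mp hinj
  let e : V ≃ₗ[ℚ_[p]] V := LinearEquiv.ofBijective L ⟨hinj, hsurj⟩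
  have he : ∀ v : V, e.symm (v - F v) = v := by
    intro v
    have h1 : e v = v - F v := rfl
    rw [← h1, e.symm_apply_apply]
  have heF : ∀ v : V, F (e.symm v) = e.symm v - v := by
    intro v
    have h1 : e (e.symm v) = v := e.apply_symm_apply v
    have h2 : e (e.symm v) = e.symm v - F (e.symm v) := rfl
    rw [h2] at h1
    exact eq_sub_of_add_eq (by rw [add_comm]; exact (sub_eq_iff_eq_add.mp h1).symm)
  -- the underlying map `T → V⧸T`
  let esymm' : V →ₗ[ℤ_[p]] V := LinearMap.restrictScalars ℤ_[p] e.symm.toLinearMap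
  let f0 : ↥T →ₗ[ℤ_[p]] V ⧸ T := T.mkQ ∘ₗ esymm' ∘ₗ (-(T.subtype))
  have hf0 : ∀ t : ↥T, f0 t = Submodule.Quotient.mk (e.symm (-(t : V))) := fun t => rfl
  have hmem : ∀ t : ↥T, f0 t ∈ LinearMap.ker (Fbar - LinearMap.id) := by
    intro t
    rw [LinearMap.mem_ker, hf0, LinearMap.sub_apply, LinearMap.id_apply, sub_eq_zero]
    have hq : Fbar (Submodule.Quotient.mk (e.symm (-(t : V)))) =
        Submodule.Quotient.mk (F (e.symm (-(t : V)))) := rfl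
    rw [hq, Submodule.Quotient.eq, heF]
    simpa using t.2
  let g : ↥T →ₗ[ℤ_[p]] ↥(LinearMap.ker (Fbar - LinearMap.id)) :=
    f0.codRestrict _ hmem
  have hgS : S ≤ LinearMap.ker g := by
    intro t ht
    obtain ⟨s, hs, hst⟩ := ht
    rw [LinearMap.mem_ker]
    apply Subtype.ext
    have hcod : ((g t : ↥(LinearMap.ker (Fbar - LinearMap.id))) : V ⧸ T) = f0 t := rfl
    rw [hcod, hf0]
    have h1 : e.symm (-(t : V)) = -s := by
      have h2 : (t : V) = s - F s := hst.symm
      rw [h2, map_neg, he]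
    rw [h1]
    simpa [Submodule.Quotient.mk_eq_zero] using T.neg_mem hs
  let gbar := S.liftQ g hgS
  have hbij : Function.Bijective gbar := by
    constructor
    · rw [← LinearMap.ker_eq_bot, eq_bot_iff]
      intro x hx
      obtain ⟨t, rfl⟩ := Submodule.Quotient.mk_surjective S x
      rw [LinearMap.mem_ker, Submodule.liftQ_apply] at hx
      have hx' : f0 t = 0 := congrArg Subtype.val hx
      rw [hf0, Submodule.Quotient.mk_eq_zero] at hx'
      rw [Submodule.mem_bot, Submodule.Quotient.mk_eq_zero]
      have hw : (LinearMap.id - F : V →ₗ[ℤ_[p]] V) (e.symm (-(t : V))) = -(t : V) := by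
        rw [LinearMap.sub_apply, LinearMap.id_apply, heF]; abel
      refine ⟨-(e.symm (-(t : V))), T.neg_mem hx', ?_⟩
      rw [map_neg, hw, neg_neg]; rfl
    · intro x
      obtain ⟨y, hy⟩ := x
      obtain ⟨v, rfl⟩ := Submodule.Quotient.mk_surjective T y
      rw [LinearMap.mem_ker, LinearMap.sub_apply, LinearMap.id_apply, sub_eq_zero] at hy
      have hFv : Fbar (Submodule.Quotient.mk v) = Submodule.Quotient.mk (F v) := rfl
      have hv : F v - v ∈ T := by
        rw [hFv] at hy
        exact (Submodule.Quotient.eq T).mp hy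
      refine ⟨Submodule.Quotient.mk ⟨F v - v, hv⟩, ?_⟩
      rw [Submodule.liftQ_apply]
      apply Subtype.ext
      have hcod : ((g ⟨F v - v, hv⟩ : ↥(LinearMap.ker (Fbar - LinearMap.id))) : V ⧸ T) =
          f0 ⟨F v - v, hv⟩ := rfl
      rw [hcod, hf0]
      simp only [neg_sub]
      rw [he]
  let eq := LinearEquiv.ofBijective gbar hbij
  refine ⟨eq.symm.toAddEquiv, ?_⟩
  intro v hv h
  show eq.symm _ = _
  rw [LinearEquiv.symm_apply_eq]
  apply Subtype.ext
  have h1 : ((eq (Submodule.Quotient.mk ⟨F v - v, hv⟩) :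
      ↥(LinearMap.ker (Fbar - LinearMap.id))) : V ⧸ T) = f0 ⟨F v - v, hv⟩ := by
    show ((gbar _ : ↥(LinearMap.ker (Fbar - LinearMap.id))) : V ⧸ T) = _
    rw [Submodule.liftQ_apply]
    rfl
  rw [h1, hf0]
  simp only [neg_sub]
  rw [he]
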